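/- Let X₁, X₂ be mean-calibrated predictors of Y (E[Y|Xᵢ]=Xᵢ a.s.) supported on [0,∞) with E[X₁]=E[X₂]=E[Y]. Then the Murphy-curve difference satisfies E[L_θ(Y,X₁)] − E[L_θ(Y,X₂)] = E[(X₂−θ)⁺] − E[(X₁−θ)⁺] = −∫₀^θ (F_{X₁}(x) − F_{X₂}(x)) dx for all θ ≥ 0. -/

import Mathlib

open MeasureTheory ProbabilityTheory

/-- Distribution function of `X` under `μ`. -/
noncomputable def cdf' {Ω : Type*} [MeasurableSpace Ω] (μ : Measure Ω) (X : Ω → ℝ) :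
    ℝ → ℝ :=
  fun t => (μ {ω | X ω ≤ t}).toReal

/-- The elementary Bregman loss. -/
noncomputable def elemLoss (θ y x : ℝ) : ℝ :=
  max (y - θ) 0 - max (x - θ) 0 - (if θ < x then y - x else 0)

section Aux

variable {Ω : Type*} {m0 : MeasurableSpace Ω} (μ : Measure Ω) [IsProbabilityMeasure μ]

lemma cdf'_mono (X : Ω → ℝ) : Monotone (cdf' μ X) := by
  intro s t hst
  apply ENNReal.toReal_mono (measure_ne_top μ _)
  exact measure_mono (fun ω hω => le_trans hω hst)

lemma cdf'_intervalIntegrable (X : Ω → ℝ) (a b : ℝ) :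
    IntervalIntegrable (cdf' μ X) MeasureTheory.volume a b :=
  (cdf'_mono μ X).intervalIntegrable

/-- The calibration term vanishes. -/
lemma indicator_term_zero (Y X : Ω → ℝ) (hX : Measurable X)
    (hY : Integrable Y μ) (hXint : Integrable X μ)
    (hcal : μ[Y | MeasurableSpace.comap X Real.measurableSpace] =ᵐ[μ] X) (θ : ℝ) :
    ∫ ω, (if θ < X ω then Y ω - X ω else 0) ∂μ = 0 := by
  have hm : MeasurableSpace.comap X Real.measurableSpace ≤ m0 := hX.comap_le
  set s : Set Ω := X ⁻¹' Set.Ioi θ with hs_def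
  have hsm : MeasurableSet[MeasurableSpace.comap X Real.measurableSpace] s :=
    ⟨Set.Ioi θ, measurableSet_Ioi, rfl⟩
  have hs0 : MeasurableSet s := hX measurableSet_Ioi
  have h1 : ∫ ω in s, Y ω ∂μ = ∫ ω in s, X ω ∂μ := by
    rw [← setIntegral_condExp hm hY hsm]
    exact setIntegral_congr_ae (hm s hsm) (hcal.mono fun ω hω _ => hω)
  have hfun : (fun ω => if θ < X ω then Y ω - X ω else 0)
      = s.indicator (fun ω => Y ω - X ω) := by
    funext ω
    by_cases h : θ < X ω <;> simp [Set.indicator, hs_def, Set.mem_preimage, Set.mem_Ioi, h]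
  rw [hfun, integral_indicator hs0,
    integral_sub (hY.integrableOn) (hXint.integrableOn), h1, sub_self]

/-- Expectation of one elementary loss. -/
lemma integral_elemLoss (Y X : Ω → ℝ) (hX : Measurable X)
    (hY : Integrable Y μ) (hXint : Integrable X μ)
    (hcal : μ[Y | MeasurableSpace.comap X Real.measurableSpace] =ᵐ[μ] X) (θ : ℝ) :
    ∫ ω, elemLoss θ (Y ω) (X ω) ∂μ
      = (∫ ω, max (Y ω - θ) 0 ∂μ) - ∫ ω, max (X ω - θ) 0 ∂μ := by
  have hY' : Integrable (fun ω => max (Y ω - θ) 0) μ :=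
    (hY.sub (integrable_const θ)).pos_part
  have hX' : Integrable (fun ω => max (X ω - θ) 0) μ :=
    (hXint.sub (integrable_const θ)).pos_part
  have hI : Integrable (fun ω => if θ < X ω then Y ω - X ω else 0) μ := by
    have hfun : (fun ω => if θ < X ω then Y ω - X ω else 0)
        = (X ⁻¹' Set.Ioi θ).indicator (fun ω => Y ω - X ω) := by
      funext ω
      by_cases h : θ < X ω <;> simp [Set.indicator, Set.mem_preimage, Set.mem_Ioi, h]
    rw [hfun]
    exact (hY.sub hXint).indicator (hX measurableSet_Ioi)
  have hYX : Integrable (fun ω => max (Y ω - θ) 0 - max (X ω - θ) 0) μ := hY'.sub hX'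
  have : (fun ω => elemLoss θ (Y ω) (X ω))
      = fun ω => max (Y ω - θ) 0 - max (X ω - θ) 0
          - (if θ < X ω then Y ω - X ω else 0) := rfl
  rw [this, integral_sub hYX hI, integral_sub hY' hX',
    indicator_term_zero μ Y X hX hY hXint hcal θ, sub_zero]

/-- Layercake formula for `min X θ`. -/
lemma integral_min_eq (X : Ω → ℝ) (hX : Measurable X) (hXint : Integrable X μ)
    (hX0 : 0 ≤ᵐ[μ] X) {θ : ℝ} (hθ : 0 ≤ θ) :
    ∫ ω, min (X ω) θ ∂μ = θ - ∫ x in (0:ℝ)..θ, cdf' μ X x := by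
  have hmin_int : Integrable (fun ω => min (X ω) θ) μ := by
    have : (fun ω => min (X ω) θ) = fun ω => X ω - max (X ω - θ) 0 := by
      funext ω
      rcases le_total (X ω) θ with h | h
      · rw [max_eq_right (sub_nonpos.2 h), min_eq_left h]; try ring
      · rw [max_eq_left (sub_nonneg.2 h), min_eq_right h]; try ring
    rw [this]
    exact hXint.sub (hXint.sub (integrable_const θ)).pos_part
  have hmin_nn : 0 ≤ᵐ[μ] fun ω => min (X ω) θ :=
    hX0.mono fun ω hω => le_min hω hθ
  rw [hmin_int.integral_eq_integral_meas_lt hmin_nn]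
  have hkey : ∀ t ∈ Set.Ioi (0:ℝ),
      ENNReal.toReal (μ {a | t < min (X a) θ})
        = Set.indicator (Set.Ioo 0 θ) (fun t => 1 - cdf' μ X t) t := by
    intro t ht
    by_cases htθ : t < θ
    · have hset : {a | t < min (X a) θ} = {a | X a ≤ t}ᶜ := by
        ext a; simp only [Set.mem_setOf_eq, Set.mem_compl_iff, lt_min_iff, not_le]
        exact ⟨fun h => h.1, fun h => ⟨h, htθ⟩⟩
      have hms : MeasurableSet {a | X a ≤ t} := measurableSet_le hX measurable_const
      rw [hset, measure_compl hms (measure_ne_top μ _), measure_univ,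
        Set.indicator_of_mem (Set.mem_Ioo.2 ⟨ht, htθ⟩)]
      rw [ENNReal.toReal_sub_of_le (prob_le_one) ENNReal.one_ne_top]
      simp [cdf']
    · have hset : {a | t < min (X a) θ} = ∅ := by
        ext a; simp only [Set.mem_setOf_eq, Set.mem_empty_iff_false, iff_false, not_lt,
          lt_min_iff, not_and]
        intro _; exact not_lt.1 htθ
      rw [hset, Set.indicator_of_notMem (fun hmem => htθ hmem.2)]
      simp
  simp only [Measure.real]
  rw [setIntegral_congr_fun measurableSet_Ioi hkey, setIntegral_indicator measurableSet_Ioo]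
  have hinter : Set.Ioi (0:ℝ) ∩ Set.Ioo 0 θ = Set.Ioo 0 θ := by
    rw [Set.inter_eq_right]; exact fun x hx => hx.1
  rw [hinter, ← integral_Ioc_eq_integral_Ioo, ← intervalIntegral.integral_of_le hθ]
  rw [intervalIntegral.integral_sub intervalIntegrable_const (cdf'_intervalIntegrable μ X 0 θ)]
  simp [hθ]

/-- Key identity for the expected positive part. -/
lemma integral_pos_part_eq (X : Ω → ℝ) (hX : Measurable X) (hXint : Integrable X μ)
    (hX0 : 0 ≤ᵐ[μ] X) {θ : ℝ} (hθ : 0 ≤ θ) :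
    ∫ ω, max (X ω - θ) 0 ∂μ
      = (∫ ω, X ω ∂μ) - θ + ∫ x in (0:ℝ)..θ, cdf' μ X x := by
  have hdecomp : (fun ω => max (X ω - θ) 0) = fun ω => X ω - min (X ω) θ := by
    funext ω
    rcases le_total (X ω) θ with h | h
    · rw [max_eq_right (sub_nonpos.2 h), min_eq_left h]; try ring
    · rw [max_eq_left (sub_nonneg.2 h), min_eq_right h]; try ring
  have hmin_int : Integrable (fun ω => min (X ω) θ) μ := by
    have : (fun ω => min (X ω) θ) = fun ω => X ω - max (X ω - θ) 0 := by
      funext ω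
      rcases le_total (X ω) θ with h | h
      · rw [max_eq_right (sub_nonpos.2 h), min_eq_left h]; try ring
      · rw [max_eq_left (sub_nonneg.2 h), min_eq_right h]; try ring
    rw [this]
    exact hXint.sub (hXint.sub (integrable_const θ)).pos_part
  rw [hdecomp, integral_sub hXint hmin_int, integral_min_eq μ X hX hXint hX0 hθ]
  ring

end Aux

/-- Murphy-curve difference of two mean-calibrated predictors:
`E[L_θ(Y,X₁)] − E[L_θ(Y,X₂)] = E[(X₂−θ)⁺] − E[(X₁−θ)⁺]
  = −∫₀^θ (F_{X₁}(x) − F_{X₂}(x)) dx` for all `θ ≥ 0`. -/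
theorem murphy_difference_of_mean_calibrated
    {Ω : Type*} {m0 : MeasurableSpace Ω} (μ : Measure Ω) [IsProbabilityMeasure μ]
    (Y X₁ X₂ : Ω → ℝ) (hX₁ : Measurable X₁) (hX₂ : Measurable X₂)
    (hY : Integrable Y μ) (hX₁int : Integrable X₁ μ) (hX₂int : Integrable X₂ μ)
    (hX₁0 : 0 ≤ᵐ[μ] X₁) (hX₂0 : 0 ≤ᵐ[μ] X₂)
    (hcal₁ : μ[Y | MeasurableSpace.comap X₁ Real.measurableSpace] =ᵐ[μ] X₁)
    (hcal₂ : μ[Y | MeasurableSpace.comap X₂ Real.measurableSpace] =ᵐ[μ] X₂)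
    (hmean₁ : ∫ ω, X₁ ω ∂μ = ∫ ω, Y ω ∂μ)
    (hmean₂ : ∫ ω, X₂ ω ∂μ = ∫ ω, Y ω ∂μ) :
    ∀ θ : ℝ, 0 ≤ θ →
      ((∫ ω, elemLoss θ (Y ω) (X₁ ω) ∂μ) - ∫ ω, elemLoss θ (Y ω) (X₂ ω) ∂μ
          = (∫ ω, max (X₂ ω - θ) 0 ∂μ) - ∫ ω, max (X₁ ω - θ) 0 ∂μ)
      ∧ ((∫ ω, max (X₂ ω - θ) 0 ∂μ) - ∫ ω, max (X₁ ω - θ) 0 ∂μ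
          = -∫ x in (0:ℝ)..θ, (cdf' μ X₁ x - cdf' μ X₂ x)) := by
  intro θ hθ
  constructor
  · rw [integral_elemLoss μ Y X₁ hX₁ hY hX₁int hcal₁ θ,
      integral_elemLoss μ Y X₂ hX₂ hY hX₂int hcal₂ θ]
    ring
  · rw [integral_pos_part_eq μ X₁ hX₁ hX₁int hX₁0 hθ,
      integral_pos_part_eq μ X₂ hX₂ hX₂int hX₂0 hθ,
      intervalIntegral.integral_sub (cdf'_intervalIntegrable μ X₁ 0 θ)
        (cdf'_intervalIntegrable μ X₂ 0 θ), hmean₁, hmean₂]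
    ring
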